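/- Let λ ≥ 1 be an integer, M = 2^λ, and let R = {2·sin(kπ/M) : k ∈ ℕ, 1 ≤ k ≤ M/2} ⊆ ℝ. Define the relation ≈ on R × R × R by (r₁, r₂, r₃) ≈ (s₁, s₂, s₃) iff there exists a real c > 0 with (s₁, s₂, s₃) = (c·r₁, c·r₂, c·r₃) or (s₁, s₂, s₃) = (c·r₂, c·r₁, c·r₃). Then ≈ is an equivalence relation on R × R × R, and the number of its equivalence classes equals (M³ + 2M² − 8M + 16)/16. -/

import Mathlib

set_option maxHeartbeats 1000000
def Fc (M t j : ℕ) : ℚ :=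
  (if j = t then 1 else 0) - (if j = M - t then 1 else 0)
    + (if t = 0 ∧ j = 0 then 1 else 0) - (if t = M ∧ j = 0 then 1 else 0)

noncomputable def zet (lam : ℕ) : ℂ := Complex.exp (Real.pi * Complex.I / ((2^lam : ℕ) : ℂ))

lemma zet_pow_M (lam : ℕ) : zet lam ^ (2^lam) = -1 := by
  have h0 : ((2^lam : ℕ) : ℂ) ≠ 0 := Nat.cast_ne_zero.mpr (by positivity)
  rw [zet, ← Complex.exp_nat_mul]
  rw [show ((2^lam : ℕ) : ℂ) * (Real.pi * Complex.I / ((2^lam : ℕ):ℂ)) = Real.pi * Complex.I by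
    field_simp]
  exact Complex.exp_pi_mul_I

lemma sum_ind (M e : ℕ) (g : ℕ → ℂ) :
    ∑ j ∈ Finset.range M, (if j = e then g j else 0) = if e < M then g e else 0 := by
  rw [Finset.sum_ite_eq' (Finset.range M) e g]
  simp

lemma zet_rep (lam : ℕ) (t : ℕ) (ht : t ≤ 2^lam) :
    zet lam ^ t - zet lam ^ (2^lam - t)
      = ∑ j ∈ Finset.range (2^lam), ((Fc (2^lam) t j : ℚ) : ℂ) * zet lam ^ j := by
  set M := 2^lam with hMdef
  have hM1 : 1 ≤ M := Nat.one_le_two_pow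
  rcases eq_or_ne t 0 with rfl | ht0
  · have hcong : ∀ j ∈ Finset.range M, ((Fc M 0 j : ℚ) : ℂ) * zet lam ^ j
        = (if j = 0 then 2 * zet lam ^ j else 0) := by
      intro j hj
      have hjM : j < M := Finset.mem_range.mp hj
      simp only [Fc, true_and]
      split_ifs <;> first | (exfalso; omega) | norm_num
    rw [Finset.sum_congr rfl hcong, sum_ind M 0 (fun j => 2 * zet lam ^ j)]
    rw [if_pos (by omega)]
    simp [Nat.sub_zero, zet_pow_M lam]
    rw [hMdef, zet_pow_M lam]; ring
  · rcases eq_or_ne t M with rfl | htM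
    · have hcong : ∀ j ∈ Finset.range M, ((Fc M M j : ℚ) : ℂ) * zet lam ^ j
          = (if j = 0 then -2 * zet lam ^ j else 0) := by
        intro j hj
        have hjM : j < M := Finset.mem_range.mp hj
        simp only [Fc, true_and]
        split_ifs <;> first | (exfalso; omega) | norm_num
      rw [Finset.sum_congr rfl hcong, sum_ind M 0 (fun j => -2 * zet lam ^ j)]
      rw [if_pos (by omega)]
      simp [Nat.sub_self, zet_pow_M lam]
      rw [hMdef, zet_pow_M lam]; ring
    · have hcong : ∀ j ∈ Finset.range M, ((Fc M t j : ℚ) : ℂ) * zet lam ^ j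
          = (if j = t then zet lam ^ j else 0) - (if j = M - t then zet lam ^ j else 0) := by
        intro j hj
        simp only [Fc, true_and]
        split_ifs <;> first | (exfalso; omega) | norm_num
      rw [Finset.sum_congr rfl hcong, Finset.sum_sub_distrib, sum_ind, sum_ind]
      rw [if_pos (by omega), if_pos (by omega)]

open Polynomial in
lemma indep (lam : ℕ) {ζ : ℂ} (hζ : IsPrimitiveRoot ζ (2 ^ (lam + 1))) (f : ℕ → ℚ)
    (h : ∑ j ∈ Finset.range (2 ^ lam), (f j : ℂ) * ζ ^ j = 0) :
    ∀ j < 2 ^ lam, f j = 0 := by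
  set M := 2 ^ lam with hMdef
  set P : ℚ[X] := ∑ j ∈ Finset.range M, C (f j) * X ^ j with hP
  have hPζ : Polynomial.aeval ζ P = 0 := by
    rw [hP, map_sum]
    simpa [map_mul, aeval_C, aeval_X_pow] using h
  have hdvd : minpoly ℚ ζ ∣ P := minpoly.dvd ℚ ζ hPζ
  have hmin : cyclotomic (2 ^ (lam + 1)) ℚ = minpoly ℚ ζ :=
    cyclotomic_eq_minpoly_rat hζ (by positivity)
  have hdeg : (minpoly ℚ ζ).natDegree = M := by
    rw [← hmin, natDegree_cyclotomic, Nat.totient_prime_pow Nat.prime_two (Nat.succ_pos lam)]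
    simp [hMdef]
  have hP0 : P = 0 := by
    by_contra hne
    have h1 := Polynomial.natDegree_le_of_dvd hdvd hne
    have h2 : P.natDegree ≤ M - 1 := by
      apply Polynomial.natDegree_sum_le_of_forall_le
      intro i hi
      calc (C (f i) * X ^ i).natDegree ≤ i := by
            simpa using (Polynomial.natDegree_C_mul_le (f i) (X ^ i)).trans (by simp)
        _ ≤ M - 1 := by have := Finset.mem_range.mp hi; omega
    have hM1 : 1 ≤ M := Nat.one_le_two_pow
    omega
  intro j hj
  have : P.coeff j = f j := by
    rw [hP, Polynomial.finset_sum_coeff]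
    rw [Finset.sum_eq_single j]
    · simp
    · intro b hb hbj; simp [Polynomial.coeff_C_mul, Polynomial.coeff_X_pow, Ne.symm hbj]
    · intro hmem; exact absurd (Finset.mem_range.mpr hj) hmem
  rw [hP0] at this
  simpa using this.symm

lemma zet_prim (lam : ℕ) : IsPrimitiveRoot (zet lam) (2 ^ (lam + 1)) := by
  have h0 : ((2^lam : ℕ) : ℂ) ≠ 0 := Nat.cast_ne_zero.mpr (by positivity)
  have := Complex.isPrimitiveRoot_exp (2^(lam+1)) (by positivity)
  have h2M : ((2^(lam+1):ℕ):ℂ) = 2 * ((2^lam:ℕ):ℂ) := by push_cast; ring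
  have hzeq : zet lam = Complex.exp (2 * (Real.pi:ℂ) * Complex.I / ((2^(lam+1):ℕ):ℂ)) := by
    rw [zet, h2M]
    congr 1
    rw [div_eq_div_iff h0 (by exact mul_ne_zero two_ne_zero h0)]
    ring
  rw [hzeq]
  exact this

lemma zet_cos (lam : ℕ) (t : ℕ) (ht : t ≤ 2^lam) :
    (2 : ℂ) * ((Real.cos (t * Real.pi / (2^lam : ℕ)) : ℝ) : ℂ)
      = zet lam ^ t - zet lam ^ (2^lam - t) := by
  set M := 2^lam with hMdef
  have h0 : ((M : ℕ) : ℂ) ≠ 0 := Nat.cast_ne_zero.mpr (by positivity)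
  have h0' : ((M : ℕ) : ℝ) ≠ 0 := Nat.cast_ne_zero.mpr (by positivity)
  have hpow : ∀ s : ℕ, zet lam ^ s = Complex.exp (s * (Real.pi * Complex.I / (M : ℕ))) := by
    intro s; rw [zet, ← Complex.exp_nat_mul]
  rw [hpow, hpow]
  have hcast : (((M - t : ℕ)) : ℂ) = (M : ℕ) - (t : ℕ) := by
    push_cast [Nat.cast_sub ht]; ring
  rw [hcast]
  have hsplit : ((M : ℕ) - (t:ℂ)) * (Real.pi * Complex.I / (M : ℕ))
      = Real.pi * Complex.I + -((t:ℂ) * (Real.pi * Complex.I / (M : ℕ))) := by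
    field_simp
    ring
  rw [hsplit, Complex.exp_add, Complex.exp_pi_mul_I]
  rw [Complex.ofReal_cos, Complex.two_cos]
  have harg : ((((t:ℝ) * Real.pi / ((M:ℕ):ℝ)) : ℝ) : ℂ) * Complex.I
      = (t:ℂ) * (Real.pi * Complex.I / (M : ℕ)) := by
    push_cast
    field_simp
  rw [harg]
  have harg2 : -((((t:ℝ) * Real.pi / ((M:ℕ):ℝ)) : ℝ) : ℂ) * Complex.I
      = -((t:ℂ) * (Real.pi * Complex.I / (M : ℕ))) := by
    rw [← harg]; ring
  rw [harg2]
  ring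

lemma coeff_eq (lam : ℕ) (u₁ s₁ u₂ s₂ : ℕ)
    (hu₁ : u₁ ≤ 2^lam) (hs₁ : s₁ ≤ 2^lam) (hu₂ : u₂ ≤ 2^lam) (hs₂ : s₂ ≤ 2^lam)
    (h : Real.cos (u₁ * Real.pi / (2^lam:ℕ)) + Real.cos (s₂ * Real.pi / (2^lam:ℕ))
      = Real.cos (u₂ * Real.pi / (2^lam:ℕ)) + Real.cos (s₁ * Real.pi / (2^lam:ℕ))) :
    ∀ j < 2^lam, Fc (2^lam) u₁ j + Fc (2^lam) s₂ j = Fc (2^lam) u₂ j + Fc (2^lam) s₁ j := by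
  set M := 2^lam with hMdef
  have hreal : Real.cos (u₁ * Real.pi / (M:ℕ)) + Real.cos (s₂ * Real.pi / (M:ℕ))
      - Real.cos (u₂ * Real.pi / (M:ℕ)) - Real.cos (s₁ * Real.pi / (M:ℕ)) = 0 := by linarith
  have h0 : ((Real.cos (u₁ * Real.pi / (M:ℕ)) + Real.cos (s₂ * Real.pi / (M:ℕ))
      - Real.cos (u₂ * Real.pi / (M:ℕ)) - Real.cos (s₁ * Real.pi / (M:ℕ)) : ℝ) : ℂ) = 0 := by
    rw [hreal, Complex.ofReal_zero]
  rw [Complex.ofReal_sub, Complex.ofReal_sub, Complex.ofReal_add] at h0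
  have hz : (zet lam ^ u₁ - zet lam ^ (M - u₁)) + (zet lam ^ s₂ - zet lam ^ (M - s₂))
      - (zet lam ^ u₂ - zet lam ^ (M - u₂)) - (zet lam ^ s₁ - zet lam ^ (M - s₁)) = 0 := by
    rw [← zet_cos lam u₁ hu₁, ← zet_cos lam s₂ hs₂, ← zet_cos lam u₂ hu₂, ← zet_cos lam s₁ hs₁]
    linear_combination (2:ℂ) * h0
  rw [zet_rep lam u₁ hu₁, zet_rep lam s₂ hs₂, zet_rep lam u₂ hu₂, zet_rep lam s₁ hs₁] at hz
  have hsum : ∑ j ∈ Finset.range M,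
      ((Fc M u₁ j + Fc M s₂ j - Fc M u₂ j - Fc M s₁ j : ℚ) : ℂ) * zet lam ^ j = 0 := by
    have hcong : ∀ j ∈ Finset.range M,
        ((Fc M u₁ j + Fc M s₂ j - Fc M u₂ j - Fc M s₁ j : ℚ) : ℂ) * zet lam ^ j
        = ((Fc M u₁ j : ℚ):ℂ) * zet lam ^ j + ((Fc M s₂ j : ℚ):ℂ) * zet lam ^ j
          - ((Fc M u₂ j : ℚ):ℂ) * zet lam ^ j - ((Fc M s₁ j : ℚ):ℂ) * zet lam ^ j := by
      intro j _
      push_cast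
      ring
    rw [Finset.sum_congr rfl hcong, Finset.sum_sub_distrib, Finset.sum_sub_distrib,
      Finset.sum_add_distrib]
    exact hz
  have hind := indep lam (zet_prim lam) _ hsum
  intro j hj
  have := hind j hj
  linarith
lemma Fc_low_low {M u j : ℕ} (hu : 2*u < M) (hj : 2*j < M) :
    Fc M u j = if j = u then (if u = 0 then 2 else 1) else 0 := by
  simp only [Fc]
  split_ifs <;> first | (exfalso; omega) | norm_num

lemma Fc_s_low {M s j : ℕ} (hs2 : 2 ≤ s) (hsM : s ≤ M) (hj : 2*j < M) :
    Fc M s j = if 2*s = M then 0 else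
      if j = M - s then (if s = M then -2 else -1) else (if j = s then 1 else 0) := by
  simp only [Fc]
  split_ifs <;> first | (exfalso; omega) | norm_num

lemma comb (M : ℕ) (hM2 : 2 ≤ M) (u₁ s₁ u₂ s₂ : ℕ)
    (hu₁ : 2*u₁ < M) (hu₂ : 2*u₂ < M)
    (hs₁ : 2 ≤ s₁) (hs₁M : s₁ ≤ M) (hs₂ : 2 ≤ s₂) (hs₂M : s₂ ≤ M)
    (hus₁ : u₁ < s₁) (hus₂ : u₂ < s₂)
    (H : ∀ j, 2*j < M → Fc M u₁ j + Fc M s₂ j = Fc M u₂ j + Fc M s₁ j) :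
    (u₁ = u₂ ∧ s₁ = s₂) ∨ (s₂ = M - u₁ ∧ s₁ = M - u₂) := by
  by_cases h12 : u₁ = u₂
  · left
    refine ⟨h12, ?_⟩
    have Hs : ∀ j, 2*j < M → Fc M s₂ j = Fc M s₁ j := by
      intro j hj
      have h := H j hj
      rw [h12] at h
      linarith
    by_cases hs1N : 2*s₁ = M
    · by_cases hs2N : 2*s₂ = M
      · omega
      · exfalso
        rcases lt_or_ge (2*s₂) M with h2 | h2
        · have h := Hs s₂ h2
          rw [Fc_s_low hs₂ hs₂M h2, Fc_s_low hs₁ hs₁M h2] at h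
          split_ifs at h <;> first | omega | norm_num at h
        · have hlow : 2*(M - s₂) < M := by omega
          have h := Hs (M - s₂) hlow
          rw [Fc_s_low hs₂ hs₂M hlow, Fc_s_low hs₁ hs₁M hlow] at h
          split_ifs at h <;> first | omega | norm_num at h
    · rcases lt_or_ge (2*s₁) M with h2 | h2
      · have h := Hs s₁ h2
        rw [Fc_s_low hs₂ hs₂M h2, Fc_s_low hs₁ hs₁M h2] at h
        split_ifs at h <;> first | omega | norm_num at h
      · have hlow : 2*(M - s₁) < M := by omega
        have h := Hs (M - s₁) hlow
        rw [Fc_s_low hs₂ hs₂M hlow, Fc_s_low hs₁ hs₁M hlow] at h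
        split_ifs at h <;> first | omega | norm_num at h
  · right
    have hA : s₂ = M - u₁ := by
      have h := H u₁ hu₁
      rw [Fc_low_low hu₁ hu₁, Fc_low_low hu₂ hu₁,
        Fc_s_low hs₂ hs₂M hu₁, Fc_s_low hs₁ hs₁M hu₁] at h
      split_ifs at h <;> first | omega | norm_num at h
    have hB : s₁ = M - u₂ := by
      have h := H u₂ hu₂
      rw [Fc_low_low hu₁ hu₂, Fc_low_low hu₂ hu₂,
        Fc_s_low hs₂ hs₂M hu₂, Fc_s_low hs₁ hs₁M hu₂] at h
      split_ifs at h <;> first | omega | norm_num at h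
    exact ⟨hA, hB⟩

lemma key_prod (lam N : ℕ) (hN : 2^lam = 2*N) (a b a' b' : ℕ)
    (ha : 1 ≤ a) (haN : a ≤ N) (hb : 1 ≤ b) (hbN : b ≤ N)
    (ha' : 1 ≤ a') (ha'N : a' ≤ N) (hb' : 1 ≤ b') (hb'N : b' ≤ N)
    (heq : Real.sin (a' * Real.pi / ((2^lam:ℕ):ℝ)) * Real.sin (b * Real.pi / ((2^lam:ℕ):ℝ))
      = Real.sin (a * Real.pi / ((2^lam:ℕ):ℝ)) * Real.sin (b' * Real.pi / ((2^lam:ℕ):ℝ))) :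
    (a = a' ∧ b = b') ∨ (a = b ∧ a' = b') := by
  set M := 2^lam with hMdef
  have prodToSum : ∀ x y : ℝ, 2*(Real.sin x * Real.sin y) = Real.cos (x-y) - Real.cos (x+y) := by
    intro x y
    rw [Real.cos_sub, Real.cos_add]
    ring
  have habs : ∀ p q : ℕ, Real.cos ((p:ℝ) * Real.pi / ((M:ℕ):ℝ) - (q:ℝ) * Real.pi / ((M:ℕ):ℝ))
      = Real.cos (((max p q - min p q : ℕ):ℝ) * Real.pi / ((M:ℕ):ℝ)) := by
    intro p q
    rcases le_total p q with h | h
    · rw [max_eq_right h, min_eq_left h]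
      have hc : ((q - p : ℕ):ℝ) = (q:ℝ) - p := by
        rw [Nat.cast_sub h]
      rw [hc]
      rw [show (p:ℝ) * Real.pi / ((M:ℕ):ℝ) - (q:ℝ) * Real.pi / ((M:ℕ):ℝ)
        = -(((q:ℝ) - p) * Real.pi / ((M:ℕ):ℝ)) by ring]
      rw [Real.cos_neg]
    · rw [max_eq_left h, min_eq_right h]
      have hc : ((p - q : ℕ):ℝ) = (p:ℝ) - q := by
        rw [Nat.cast_sub h]
      rw [hc]
      congr 1
      ring
  have hsumc : ∀ p q : ℕ, (p:ℝ) * Real.pi / ((M:ℕ):ℝ) + (q:ℝ) * Real.pi / ((M:ℕ):ℝ)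
      = ((p+q:ℕ):ℝ) * Real.pi / ((M:ℕ):ℝ) := by
    intro p q
    push_cast
    ring
  have h1 := prodToSum ((a':ℝ) * Real.pi / ((M:ℕ):ℝ)) ((b:ℝ) * Real.pi / ((M:ℕ):ℝ))
  have h2 := prodToSum ((a:ℝ) * Real.pi / ((M:ℕ):ℝ)) ((b':ℝ) * Real.pi / ((M:ℕ):ℝ))
  rw [habs a' b, hsumc a' b] at h1
  rw [habs a b', hsumc a b'] at h2
  have hcos : Real.cos (((max a' b - min a' b : ℕ):ℝ) * Real.pi / ((M:ℕ):ℝ))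
        + Real.cos (((a + b' : ℕ):ℝ) * Real.pi / ((M:ℕ):ℝ))
      = Real.cos (((max a b' - min a b' : ℕ):ℝ) * Real.pi / ((M:ℕ):ℝ))
        + Real.cos (((a' + b : ℕ):ℝ) * Real.pi / ((M:ℕ):ℝ)) := by
    linarith [h1, h2, heq]
  have hN1 : 1 ≤ N := le_trans ha haN
  have happly := coeff_eq lam (max a' b - min a' b) (a' + b) (max a b' - min a b') (a + b')
    (by omega) (by omega) (by omega) (by omega) hcos
  have hcomb := comb M (by omega) (max a' b - min a' b) (a' + b) (max a b' - min a b') (a + b')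
    (by omega) (by omega) (by omega) (by omega) (by omega) (by omega) (by omega) (by omega)
    (fun j hj => happly j (by omega))
  rcases hcomb with ⟨hc1, hc2⟩ | ⟨hc1, hc2⟩ <;> omega

def nf (t : ℕ × ℕ × ℕ) : ℕ × ℕ × ℕ :=
  if t.1 = t.2.1 ∧ t.2.1 = t.2.2 then (1, 1, 1)
  else (min t.1 t.2.1, max t.1 t.2.1, t.2.2)

lemma nf_congr {a b d a' b' d' : ℕ}
    (h : (a = a' ∧ b = b' ∧ d = d') ∨ (a = b' ∧ b = a' ∧ d = d')
      ∨ (a = b ∧ b = d ∧ a' = b' ∧ b' = d')) :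
    nf (a, b, d) = nf (a', b', d') := by
  rcases h with ⟨rfl, rfl, rfl⟩ | ⟨h1, h2, h3⟩ | ⟨h1, h2, h3, h4⟩
  · rfl
  · subst h1; subst h2; subst h3
    simp only [nf]
    split_ifs with hA hB hB <;> first | rfl | (exfalso; omega) |
      (simp [Prod.ext_iff]; omega)
  · simp only [nf]
    rw [if_pos ⟨h1, h2⟩, if_pos ⟨h3, h4⟩]

lemma nf_eq_iff {a b d a' b' d' : ℕ} (hnf : nf (a, b, d) = nf (a', b', d'))
    (hc : ¬(a = b ∧ b = d)) (hc' : ¬(a' = b' ∧ b' = d')) :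
    (a = a' ∧ b = b' ∧ d = d') ∨ (a = b' ∧ b = a' ∧ d = d') := by
  simp only [nf, if_neg hc, if_neg hc', Prod.ext_iff] at hnf
  omega

open Finset in
lemma count_A (N : ℕ) :
    2 * ((Icc 1 N ×ˢ Icc 1 N ×ˢ Icc 1 N).filter (fun t => t.1 ≤ t.2.1)).card
      = N*N*N + N*N := by
  set S := Icc 1 N ×ˢ Icc 1 N ×ˢ Icc 1 N with hS
  have hScard : S.card = N*N*N := by
    simp [hS, Finset.card_product, Nat.card_Icc]
    ring
  have hsplit := Finset.card_filter_add_card_filter_not (s := S)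
    (p := fun t => t.1 ≤ t.2.1)
  have hgt : (S.filter fun t => ¬t.1 ≤ t.2.1) = S.filter fun t => t.2.1 < t.1 :=
    Finset.filter_congr (fun x _ => by simp [not_le])
  have hle_split : (S.filter fun t => t.1 ≤ t.2.1)
      = (S.filter fun t => t.1 < t.2.1) ∪ (S.filter fun t => t.1 = t.2.1) := by
    rw [← Finset.filter_or]
    exact Finset.filter_congr (fun x _ => by constructor <;> intro h <;> omega)
  have hdisj : Disjoint (S.filter fun t => t.1 < t.2.1) (S.filter fun t => t.1 = t.2.1) := by
    rw [Finset.disjoint_left]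
    intro a ha ha'
    simp only [Finset.mem_filter] at ha ha'
    omega
  have hle_card : (S.filter fun t => t.1 ≤ t.2.1).card
      = (S.filter fun t => t.1 < t.2.1).card + (S.filter fun t => t.1 = t.2.1).card := by
    rw [hle_split, Finset.card_union_of_disjoint hdisj]
  have hswap : (S.filter fun t => t.1 < t.2.1).card = (S.filter fun t => t.2.1 < t.1).card := by
    apply Finset.card_nbij' (i := fun t => (t.2.1, t.1, t.2.2)) (j := fun t => (t.2.1, t.1, t.2.2))
    · intro a ha
      simp only [hS, Finset.mem_coe, Finset.mem_filter, Finset.mem_product] at ha ⊢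
      exact ⟨⟨ha.1.2.1, ha.1.1, ha.1.2.2⟩, ha.2⟩
    · intro a ha
      simp only [hS, Finset.mem_coe, Finset.mem_filter, Finset.mem_product] at ha ⊢
      exact ⟨⟨ha.1.2.1, ha.1.1, ha.1.2.2⟩, ha.2⟩
    · intro a _; rfl
    · intro a _; rfl
  have heq_card : (S.filter fun t => t.1 = t.2.1).card = N*N := by
    have : (S.filter fun t => t.1 = t.2.1).card = (Icc 1 N ×ˢ Icc 1 N).card := by
      apply Finset.card_nbij' (i := fun t => (t.1, t.2.2)) (j := fun r => (r.1, r.1, r.2))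
      · intro a ha
        simp only [hS, Finset.mem_coe, Finset.mem_filter, Finset.mem_product] at ha ⊢
        exact ⟨ha.1.1, ha.1.2.2⟩
      · intro a ha
        simp only [hS, Finset.mem_coe, Finset.mem_filter, Finset.mem_product] at ha ⊢
        exact ⟨⟨ha.1, ha.1, ha.2⟩, trivial⟩
      · intro a ha
        simp only [hS, Finset.mem_coe, Finset.mem_filter, Finset.mem_product] at ha
        obtain ⟨x, y, z⟩ := a
        have hxy : x = y := ha.2
        subst hxy
        rfl
      · intro a _; rfl
    rw [this, Finset.card_product, Nat.card_Icc]
    simp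
  rw [hgt] at hsplit
  omega

open Finset in
lemma count_T (N : ℕ) (hN1 : 1 ≤ N) :
    ∃ A', 2 * A' = N*N*N + N*N ∧ N ≤ A' ∧
    (insert ((1:ℕ),(1:ℕ),(1:ℕ)) ((Icc 1 N ×ˢ Icc 1 N ×ˢ Icc 1 N).filter
      (fun t => t.1 ≤ t.2.1 ∧ ¬(t.1 = t.2.1 ∧ t.2.1 = t.2.2)))).card = A' - N + 1 := by
  classical
  set S := Icc 1 N ×ˢ Icc 1 N ×ˢ Icc 1 N with hS
  set A := S.filter (fun t => t.1 ≤ t.2.1) with hA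
  refine ⟨A.card, count_A N, ?_, ?_⟩
  · -- N ≤ A.card : constants are in A
    have hsub : (Icc 1 N).image (fun k => (k, k, k)) ⊆ A := by
      intro t ht
      simp only [Finset.mem_image, Finset.mem_Icc] at ht
      obtain ⟨k, hk, rfl⟩ := ht
      simp only [hA, hS, Finset.mem_filter, Finset.mem_product, Finset.mem_Icc]
      omega
    have hcardim : ((Icc 1 N).image (fun k => (k, k, k))).card = N := by
      rw [Finset.card_image_of_injective _ (fun x y h => by
        simpa using congrArg Prod.fst h)]
      simp [Nat.card_Icc]
    calc N = ((Icc 1 N).image (fun k => (k, k, k))).card := hcardim.symm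
      _ ≤ A.card := Finset.card_le_card hsub
  · have hnotmem : ((1:ℕ),(1:ℕ),(1:ℕ)) ∉ (S.filter
        (fun t => t.1 ≤ t.2.1 ∧ ¬(t.1 = t.2.1 ∧ t.2.1 = t.2.2))) := by
      simp [Finset.mem_filter]
    rw [Finset.card_insert_of_notMem hnotmem]
    congr 1
    -- filter card = A.card - N
    have hff : (A.filter fun t => ¬(t.1 = t.2.1 ∧ t.2.1 = t.2.2))
        = S.filter (fun t => t.1 ≤ t.2.1 ∧ ¬(t.1 = t.2.1 ∧ t.2.1 = t.2.2)) := by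
      rw [hA, Finset.filter_filter]
    have hcc : (A.filter fun t => (t.1 = t.2.1 ∧ t.2.1 = t.2.2)).card = N := by
      have h1 : (A.filter fun t => (t.1 = t.2.1 ∧ t.2.1 = t.2.2))
          = (Icc 1 N).image (fun k => (k, k, k)) := by
        ext t
        simp only [hA, hS, Finset.mem_filter, Finset.mem_product, Finset.mem_Icc,
          Finset.mem_image, Finset.filter_filter]
        obtain ⟨x, y, z⟩ := t
        constructor
        · rintro ⟨⟨h1, h2, h3⟩, h4, h5, h6⟩
          exact ⟨x, by omega, by simp_all⟩
        · rintro ⟨k, hk, h⟩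
          simp only [Prod.mk.injEq] at h
          obtain ⟨rfl, rfl, rfl⟩ := h
          refine ⟨⟨⟨hk.1, hk.2⟩, ⟨hk.1, hk.2⟩, hk.1, hk.2⟩, le_refl _, rfl, rfl⟩
      rw [h1]
      rw [Finset.card_image_of_injective _ (fun x y h => by simpa using congrArg Prod.fst h)]
      simp [Nat.card_Icc]
    have := Finset.card_filter_add_card_filter_not (s := A)
      (p := fun t => (t.1 = t.2.1 ∧ t.2.1 = t.2.2))
    rw [hff] at this
    omega

lemma nf_const {a b d : ℕ} (h : a = b ∧ b = d) : nf (a, b, d) = (1, 1, 1) := by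
  simp only [nf]
  rw [if_pos h]

lemma nf_nonconst {a b d : ℕ} (h : ¬(a = b ∧ b = d)) :
    nf (a, b, d) = (min a b, max a b, d) := by
  simp only [nf]
  rw [if_neg h]

theorem card_classes_triples (lam : ℕ) (hlam : 1 ≤ lam) (M : ℕ) (hM : M = 2 ^ lam)
    (Rset : Set ℝ)
    (hRset : Rset = {r : ℝ | ∃ k : ℕ, 1 ≤ k ∧ k ≤ M / 2 ∧ r = 2 * Real.sin (k * Real.pi / M)})
    (rel : Rset × Rset × Rset → Rset × Rset × Rset → Prop)
    (hrel : ∀ p q : Rset × Rset × Rset, rel p q ↔ ∃ c : ℝ, 0 < c ∧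
      (((q.1 : ℝ) = c * (p.1 : ℝ) ∧ (q.2.1 : ℝ) = c * (p.2.1 : ℝ) ∧
          (q.2.2 : ℝ) = c * (p.2.2 : ℝ)) ∨
       ((q.1 : ℝ) = c * (p.2.1 : ℝ) ∧ (q.2.1 : ℝ) = c * (p.1 : ℝ) ∧
          (q.2.2 : ℝ) = c * (p.2.2 : ℝ)))) :
    Equivalence rel ∧ Nat.card (Quot rel) = (M ^ 3 + 2 * M ^ 2 - 8 * M + 16) / 16 := by
  obtain ⟨l, rfl⟩ : ∃ l, lam = l + 1 := ⟨lam - 1, by omega⟩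
  subst hM
  have hMN : (2:ℕ)^(l+1) = 2*(2^l) := by rw [pow_succ]; ring
  set N := (2:ℕ)^l with hNdef
  have hN1 : 1 ≤ N := Nat.one_le_two_pow
  have hdiv : (2:ℕ)^(l+1)/2 = N := by omega
  have hMRpos : (0:ℝ) < ((2^(l+1) : ℕ) : ℝ) := by positivity
  have hpi := Real.pi_pos
  have hargpos : ∀ k : ℕ, 1 ≤ k → 0 < (k:ℝ) * Real.pi / ((2^(l+1) : ℕ) : ℝ) := by
    intro k hk
    have hk' : (0:ℝ) < (k:ℝ) := by exact_mod_cast hk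
    positivity
  have harghalf : ∀ k : ℕ, k ≤ N → (k:ℝ) * Real.pi / ((2^(l+1) : ℕ) : ℝ) ≤ Real.pi / 2 := by
    intro k hk
    rw [div_le_div_iff₀ hMRpos two_pos]
    have hk' : (2:ℝ) * (k:ℝ) ≤ ((2^(l+1) : ℕ) : ℝ) := by
      have : 2 * k ≤ 2^(l+1) := by omega
      exact_mod_cast this
    nlinarith
  have hsinpos : ∀ k : ℕ, 1 ≤ k → k ≤ N →
      0 < Real.sin ((k:ℝ) * Real.pi / ((2^(l+1) : ℕ) : ℝ)) := by
    intro k h1 h2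
    apply Real.sin_pos_of_pos_of_lt_pi (hargpos k h1)
    have := harghalf k h2
    nlinarith
  have hmono : ∀ k k' : ℕ, 1 ≤ k → k ≤ N → 1 ≤ k' → k' ≤ N →
      Real.sin ((k:ℝ) * Real.pi / ((2^(l+1) : ℕ) : ℝ))
        = Real.sin ((k':ℝ) * Real.pi / ((2^(l+1) : ℕ) : ℝ)) → k = k' := by
    intro k k' h1 h2 h3 h4 heq
    have hmem : ∀ j : ℕ, 1 ≤ j → j ≤ N →
        (j:ℝ) * Real.pi / ((2^(l+1) : ℕ) : ℝ) ∈ Set.Icc (-(Real.pi/2)) (Real.pi/2) := by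
      intro j hj1 hj2
      constructor
      · have := hargpos j hj1; linarith
      · exact harghalf j hj2
    have harg := Real.strictMonoOn_sin.injOn (hmem k h1 h2) (hmem k' h3 h4) heq
    have hπM : Real.pi / ((2^(l+1) : ℕ) : ℝ) ≠ 0 := by positivity
    have hc : (k:ℝ) = (k':ℝ) := by
      have h' : (k:ℝ) * (Real.pi / ((2^(l+1) : ℕ) : ℝ))
          = (k':ℝ) * (Real.pi / ((2^(l+1) : ℕ) : ℝ)) := by
        rw [← mul_div_assoc, ← mul_div_assoc]
        exact harg
      exact mul_right_cancel₀ hπM h'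
    exact_mod_cast hc
  have hgmem : ∀ k : ℕ, 1 ≤ k → k ≤ N →
      2 * Real.sin ((k:ℝ) * Real.pi / ((2^(l+1) : ℕ) : ℝ)) ∈ Rset := by
    intro k h1 h2
    rw [hRset]
    refine ⟨k, h1, ?_, rfl⟩
    rw [hdiv]
    exact h2
  have hex : ∀ x : ↥Rset, ∃ k : ℕ, (1 ≤ k ∧ k ≤ N) ∧
      (x:ℝ) = 2 * Real.sin ((k:ℝ) * Real.pi / ((2^(l+1) : ℕ) : ℝ)) := by
    intro x
    have hx : (x:ℝ) ∈ {r : ℝ | ∃ k : ℕ, 1 ≤ k ∧ k ≤ 2^(l+1) / 2 ∧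
        r = 2 * Real.sin (k * Real.pi / (2^(l+1):ℕ))} := by
      rw [← hRset]
      exact x.2
    obtain ⟨k, h1, h2, h3⟩ := hx
    rw [hdiv] at h2
    exact ⟨k, ⟨h1, h2⟩, h3⟩
  choose idx hidxb hidxv using hex
  have huniq : ∀ (k : ℕ), 1 ≤ k → k ≤ N →
      ∀ (hm : 2 * Real.sin ((k:ℝ) * Real.pi / ((2^(l+1) : ℕ) : ℝ)) ∈ Rset),
      idx ⟨_, hm⟩ = k := by
    intro k h1 h2 hm
    obtain ⟨hb1, hb2⟩ := hidxb ⟨_, hm⟩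
    apply hmono _ _ hb1 hb2 h1 h2
    have hv : (2:ℝ) * Real.sin ((k:ℝ) * Real.pi / ((2^(l+1) : ℕ) : ℝ))
        = 2 * Real.sin ((↑(idx ⟨_, hm⟩):ℝ) * Real.pi / ((2^(l+1) : ℕ) : ℝ)) := hidxv ⟨_, hm⟩
    linarith
  have hMN' : (2:ℕ)^(l+1) = 2*N := hMN
  have hkey : ∀ a b a' b' : ℕ, 1 ≤ a → a ≤ N → 1 ≤ b → b ≤ N → 1 ≤ a' → a' ≤ N →
      1 ≤ b' → b' ≤ N →
      Real.sin ((a':ℝ) * Real.pi / ((2^(l+1):ℕ):ℝ)) * Real.sin ((b:ℝ) * Real.pi / ((2^(l+1):ℕ):ℝ))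
        = Real.sin ((a:ℝ) * Real.pi / ((2^(l+1):ℕ):ℝ)) * Real.sin ((b':ℝ) * Real.pi / ((2^(l+1):ℕ):ℝ)) →
      (a = a' ∧ b = b') ∨ (a = b ∧ a' = b') := by
    intro a b a' b' h1 h2 h3 h4 h5 h6 h7 h8 h9
    exact key_prod (l+1) N hMN' a b a' b' h1 h2 h3 h4 h5 h6 h7 h8 h9
  set φ : ↥Rset × ↥Rset × ↥Rset → ℕ × ℕ × ℕ :=
    fun p => nf (idx p.1, idx p.2.1, idx p.2.2) with hφdef0
  have hφdef : ∀ p, φ p = nf (idx p.1, idx p.2.1, idx p.2.2) := fun _ => rfl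
  have hfwd : ∀ p q, rel p q → φ p = φ q := by
    intro p q hpq
    rw [hrel] at hpq
    obtain ⟨c, hc0, hcase⟩ := hpq
    obtain ⟨hp11, hp12⟩ := hidxb p.1
    obtain ⟨hp21, hp22⟩ := hidxb p.2.1
    obtain ⟨hp31, hp32⟩ := hidxb p.2.2
    obtain ⟨hq11, hq12⟩ := hidxb q.1
    obtain ⟨hq21, hq22⟩ := hidxb q.2.1
    obtain ⟨hq31, hq32⟩ := hidxb q.2.2
    rw [hφdef, hφdef]
    rcases hcase with ⟨h1, h2, h3⟩ | ⟨h1, h2, h3⟩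
    · rw [hidxv q.1, hidxv p.1] at h1
      rw [hidxv q.2.1, hidxv p.2.1] at h2
      rw [hidxv q.2.2, hidxv p.2.2] at h3
      have e1 : Real.sin ((↑(idx q.1):ℝ) * Real.pi / ((2^(l+1):ℕ):ℝ))
          = c * Real.sin ((↑(idx p.1):ℝ) * Real.pi / ((2^(l+1):ℕ):ℝ)) := by linarith
      have e2 : Real.sin ((↑(idx q.2.1):ℝ) * Real.pi / ((2^(l+1):ℕ):ℝ))
          = c * Real.sin ((↑(idx p.2.1):ℝ) * Real.pi / ((2^(l+1):ℕ):ℝ)) := by linarith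
      have e3 : Real.sin ((↑(idx q.2.2):ℝ) * Real.pi / ((2^(l+1):ℕ):ℝ))
          = c * Real.sin ((↑(idx p.2.2):ℝ) * Real.pi / ((2^(l+1):ℕ):ℝ)) := by linarith
      have k1 := hkey (idx p.1) (idx p.2.1) (idx q.1) (idx q.2.1)
        hp11 hp12 hp21 hp22 hq11 hq12 hq21 hq22
        (by linear_combination Real.sin ((↑(idx p.2.1):ℝ) * Real.pi / ((2^(l+1):ℕ):ℝ)) * e1
          - Real.sin ((↑(idx p.1):ℝ) * Real.pi / ((2^(l+1):ℕ):ℝ)) * e2)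
      have k2 := hkey (idx p.1) (idx p.2.2) (idx q.1) (idx q.2.2)
        hp11 hp12 hp31 hp32 hq11 hq12 hq31 hq32
        (by linear_combination Real.sin ((↑(idx p.2.2):ℝ) * Real.pi / ((2^(l+1):ℕ):ℝ)) * e1
          - Real.sin ((↑(idx p.1):ℝ) * Real.pi / ((2^(l+1):ℕ):ℝ)) * e3)
      have k3 := hkey (idx p.2.1) (idx p.2.2) (idx q.2.1) (idx q.2.2)
        hp21 hp22 hp31 hp32 hq21 hq22 hq31 hq32
        (by linear_combination Real.sin ((↑(idx p.2.2):ℝ) * Real.pi / ((2^(l+1):ℕ):ℝ)) * e2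
          - Real.sin ((↑(idx p.2.1):ℝ) * Real.pi / ((2^(l+1):ℕ):ℝ)) * e3)
      exact nf_congr (by omega)
    · rw [hidxv q.1, hidxv p.2.1] at h1
      rw [hidxv q.2.1, hidxv p.1] at h2
      rw [hidxv q.2.2, hidxv p.2.2] at h3
      have e1 : Real.sin ((↑(idx q.1):ℝ) * Real.pi / ((2^(l+1):ℕ):ℝ))
          = c * Real.sin ((↑(idx p.2.1):ℝ) * Real.pi / ((2^(l+1):ℕ):ℝ)) := by linarith
      have e2 : Real.sin ((↑(idx q.2.1):ℝ) * Real.pi / ((2^(l+1):ℕ):ℝ))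
          = c * Real.sin ((↑(idx p.1):ℝ) * Real.pi / ((2^(l+1):ℕ):ℝ)) := by linarith
      have e3 : Real.sin ((↑(idx q.2.2):ℝ) * Real.pi / ((2^(l+1):ℕ):ℝ))
          = c * Real.sin ((↑(idx p.2.2):ℝ) * Real.pi / ((2^(l+1):ℕ):ℝ)) := by linarith
      have k1 := hkey (idx p.2.1) (idx p.1) (idx q.1) (idx q.2.1)
        hp21 hp22 hp11 hp12 hq11 hq12 hq21 hq22
        (by linear_combination Real.sin ((↑(idx p.1):ℝ) * Real.pi / ((2^(l+1):ℕ):ℝ)) * e1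
          - Real.sin ((↑(idx p.2.1):ℝ) * Real.pi / ((2^(l+1):ℕ):ℝ)) * e2)
      have k2 := hkey (idx p.2.1) (idx p.2.2) (idx q.1) (idx q.2.2)
        hp21 hp22 hp31 hp32 hq11 hq12 hq31 hq32
        (by linear_combination Real.sin ((↑(idx p.2.2):ℝ) * Real.pi / ((2^(l+1):ℕ):ℝ)) * e1
          - Real.sin ((↑(idx p.2.1):ℝ) * Real.pi / ((2^(l+1):ℕ):ℝ)) * e3)
      have k3 := hkey (idx p.1) (idx p.2.2) (idx q.2.1) (idx q.2.2)
        hp11 hp12 hp31 hp32 hq21 hq22 hq31 hq32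
        (by linear_combination Real.sin ((↑(idx p.2.2):ℝ) * Real.pi / ((2^(l+1):ℕ):ℝ)) * e2
          - Real.sin ((↑(idx p.1):ℝ) * Real.pi / ((2^(l+1):ℕ):ℝ)) * e3)
      exact nf_congr (by omega)
  have hbwd : ∀ p q, φ p = φ q → rel p q := by
    intro p q h
    rw [hrel]
    rw [hφdef, hφdef] at h
    obtain ⟨hp11, hp12⟩ := hidxb p.1
    obtain ⟨hp21, hp22⟩ := hidxb p.2.1
    obtain ⟨hp31, hp32⟩ := hidxb p.2.2
    obtain ⟨hq11, hq12⟩ := hidxb q.1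
    obtain ⟨hq21, hq22⟩ := hidxb q.2.1
    obtain ⟨hq31, hq32⟩ := hidxb q.2.2
    by_cases hc1 : idx p.1 = idx p.2.1 ∧ idx p.2.1 = idx p.2.2
    · by_cases hc2 : idx q.1 = idx q.2.1 ∧ idx q.2.1 = idx q.2.2
      · refine ⟨Real.sin ((↑(idx q.1):ℝ) * Real.pi / ((2^(l+1):ℕ):ℝ))
            / Real.sin ((↑(idx p.1):ℝ) * Real.pi / ((2^(l+1):ℕ):ℝ)),
          div_pos (hsinpos _ hq11 hq12) (hsinpos _ hp11 hp12), Or.inl ⟨?_, ?_, ?_⟩⟩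
        · rw [hidxv q.1, hidxv p.1, div_mul_eq_mul_div,
            eq_div_iff (ne_of_gt (hsinpos _ hp11 hp12))]
          ring
        · rw [hidxv q.2.1, hidxv p.2.1, ← hc2.1, ← hc1.1, div_mul_eq_mul_div,
            eq_div_iff (ne_of_gt (hsinpos _ hp11 hp12))]
          ring
        · rw [hidxv q.2.2, hidxv p.2.2, ← hc2.2, ← hc2.1, ← hc1.2, ← hc1.1, div_mul_eq_mul_div,
            eq_div_iff (ne_of_gt (hsinpos _ hp11 hp12))]
          ring
      · exfalso
        rw [nf_const hc1, nf_nonconst hc2, Prod.ext_iff, Prod.ext_iff] at h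
        simp only at h
        omega
    · by_cases hc2 : idx q.1 = idx q.2.1 ∧ idx q.2.1 = idx q.2.2
      · exfalso
        rw [nf_const hc2, nf_nonconst hc1, Prod.ext_iff, Prod.ext_iff] at h
        simp only at h
        omega
      · have hh := nf_eq_iff h hc1 hc2
        rcases hh with ⟨h1, h2, h3⟩ | ⟨h1, h2, h3⟩
        · refine ⟨1, one_pos, Or.inl ⟨?_, ?_, ?_⟩⟩
          · rw [hidxv q.1, hidxv p.1, h1]; ring
          · rw [hidxv q.2.1, hidxv p.2.1, h2]; ring
          · rw [hidxv q.2.2, hidxv p.2.2, h3]; ring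
        · refine ⟨1, one_pos, Or.inr ⟨?_, ?_, ?_⟩⟩
          · rw [hidxv q.1, hidxv p.2.1, h2]; ring
          · rw [hidxv q.2.1, hidxv p.1, h1]; ring
          · rw [hidxv q.2.2, hidxv p.2.2, h3]; ring
  have hiff : ∀ p q, rel p q ↔ φ p = φ q := fun p q => ⟨hfwd p q, hbwd p q⟩
  refine ⟨⟨fun p => (hiff p p).2 rfl,
    fun {p q} h => (hiff q p).2 ((hiff p q).1 h).symm,
    fun {p q r} h h' => (hiff p r).2 (((hiff p q).1 h).trans ((hiff q r).1 h'))⟩, ?_⟩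
  set φbar : Quot rel → ℕ × ℕ × ℕ := Quot.lift φ hfwd with hφbar
  have hφbar_mk : ∀ p, φbar (Quot.mk rel p) = φ p := fun p => rfl
  have hinj : Function.Injective φbar := by
    intro x y hxy
    obtain ⟨p, rfl⟩ := Quot.exists_rep x
    obtain ⟨q, rfl⟩ := Quot.exists_rep y
    rw [hφbar_mk, hφbar_mk] at hxy
    exact Quot.sound (hbwd p q hxy)
  have hrangebar : Set.range φbar = Set.range φ := by
    ext v
    constructor
    · rintro ⟨x, rfl⟩
      obtain ⟨p, rfl⟩ := Quot.exists_rep x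
      exact ⟨p, (hφbar_mk p).symm⟩
    · rintro ⟨p, rfl⟩
      exact ⟨Quot.mk rel p, hφbar_mk p⟩
  have hcard1 : Nat.card (Quot rel) = Nat.card (Set.range φ) := by
    have hc2 := Nat.card_range_of_injective hinj
    calc Nat.card (Quot rel) = Nat.card (Set.range φbar) := hc2.symm
      _ = Nat.card (Set.range φ) := Nat.card_congr (Equiv.setCongr hrangebar)
  have hrangeT : Set.range φ
      = ((insert ((1:ℕ),(1:ℕ),(1:ℕ)) ((Finset.Icc 1 N ×ˢ Finset.Icc 1 N ×ˢ Finset.Icc 1 N).filter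
        (fun t => t.1 ≤ t.2.1 ∧ ¬(t.1 = t.2.1 ∧ t.2.1 = t.2.2)))) : Finset (ℕ×ℕ×ℕ)) := by
    apply Set.eq_of_subset_of_subset
    · rintro v ⟨p, rfl⟩
      rw [hφdef p]
      obtain ⟨hp11, hp12⟩ := hidxb p.1
      obtain ⟨hp21, hp22⟩ := hidxb p.2.1
      obtain ⟨hp31, hp32⟩ := hidxb p.2.2
      simp only [Finset.coe_insert, Set.mem_insert_iff, Finset.mem_coe, Finset.mem_filter,
        Finset.mem_product, Finset.mem_Icc]
      by_cases hcst : idx p.1 = idx p.2.1 ∧ idx p.2.1 = idx p.2.2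
      · left
        rw [nf_const hcst]
      · right
        rw [nf_nonconst hcst]
        simp only
        omega
    · intro v hv
      simp only [Finset.coe_insert, Set.mem_insert_iff, Finset.mem_coe, Finset.mem_filter,
        Finset.mem_product, Finset.mem_Icc] at hv
      obtain ⟨x, y, z⟩ := v
      rcases hv with hv | ⟨⟨hx, hy, hz⟩, hle, hnc⟩
      · obtain ⟨rfl, rfl, rfl⟩ : x = 1 ∧ y = 1 ∧ z = 1 := by
          simp only [Prod.mk.injEq] at hv
          exact ⟨hv.1, hv.2.1, hv.2.2⟩
        refine ⟨(⟨_, hgmem 1 le_rfl hN1⟩, ⟨_, hgmem 1 le_rfl hN1⟩, ⟨_, hgmem 1 le_rfl hN1⟩), ?_⟩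
        rw [hφdef]
        simp only
        rw [huniq 1 le_rfl hN1]
        exact nf_const ⟨rfl, rfl⟩
      · simp only at hx hy hz hle hnc
        refine ⟨(⟨_, hgmem x hx.1 hx.2⟩, ⟨_, hgmem y hy.1 hy.2⟩, ⟨_, hgmem z hz.1 hz.2⟩), ?_⟩
        rw [hφdef]
        simp only
        rw [huniq x hx.1 hx.2, huniq y hy.1 hy.2, huniq z hz.1 hz.2]
        rw [nf_nonconst hnc]
        rw [min_eq_left hle, max_eq_right hle]
  obtain ⟨A', hA1, hA2, hTcard⟩ := count_T N hN1
  rw [hcard1, hrangeT, Nat.card_coe_set_eq, Set.ncard_coe_finset, hTcard]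
  have h8 : ((2:ℕ)^(l+1))^3 + 2*((2:ℕ)^(l+1))^2 = 8*(N*N*N + N*N) := by
    rw [hMN']; ring
  rw [h8, hMN', ← hA1]
  omega
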